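/- In the GFP-style sponsored-search first-price auction with two slots and two bidders where all β_i = 1, α_1 > α_2 > 0, and both bidders' per-click payment must equal their single bid regardless of slot, no pure-strategy Nash equilibrium exists provided v_1, v_2 > 0 and bids range over nonnegative reals. -/

import Mathlib

/-- **The GFP sponsored-search auction has no pure-strategy Nash equilibrium.**
Two slots with click-through rates `α1 > α2 > 0`, two bidders with per-click
values `v1, v2 > 0` (all `β = 1`). Each bidder submits a single per-click bid
`x_i ≥ 0` and is assigned by `top` (the bidder with the strictly higher bid
gets slot 1; ties broken by the fixed rule `top`), paying her own bid per
click. A bidder in slot `j` gets expected utility `α_j (v_i − x_i)`. There is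
no bid pair `(x1, x2)` from which no bidder can strictly improve by a
unilateral deviation. -/
theorem gfp_no_pure_nash (α1 α2 v1 v2 : ℝ)
    (hα : α2 < α1) (hα2 : 0 < α2) (hv1 : 0 < v1) (hv2 : 0 < v2)
    (top : ℝ → ℝ → Bool)
    (htop1 : ∀ x1 x2, x2 < x1 → top x1 x2 = true)
    (htop2 : ∀ x1 x2, x1 < x2 → top x1 x2 = false) :
    let u1 : ℝ → ℝ → ℝ := fun x1 x2 => (if top x1 x2 then α1 else α2) * (v1 - x1)
    let u2 : ℝ → ℝ → ℝ := fun x1 x2 => (if top x1 x2 then α2 else α1) * (v2 - x2)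
    ¬ ∃ x1 x2 : ℝ, 0 ≤ x1 ∧ 0 ≤ x2 ∧
      (∀ x : ℝ, 0 ≤ x → u1 x x2 ≤ u1 x1 x2) ∧
      (∀ x : ℝ, 0 ≤ x → u2 x1 x ≤ u2 x1 x2) := by
  intro u1 u2
  rintro ⟨x1, x2, hx1, hx2, h1, h2⟩
  have hα1 : 0 < α1 := hα2.trans hα
  rcases lt_trichotomy x1 x2 with h | h | h
  · -- bidder 2 wins; she lowers her bid to the midpoint and still wins
    set m := (x1 + x2) / 2 with hm
    have hm1 : x1 < m := by rw [hm]; linarith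
    have hm2 : m < x2 := by rw [hm]; linarith
    have hm0 : 0 ≤ m := by linarith
    have key := h2 m hm0
    simp only [u2, htop2 _ _ h, htop2 _ _ hm1, if_false, Bool.false_eq_true] at key
    nlinarith
  · -- tie: x1 = x2
    subst h
    rcases eq_or_lt_of_le hx1 with h0 | h0
    · -- tie at 0: the loser overbids slightly and grabs slot 1
      cases htb : top x1 x1 with
      | true =>
        -- bidder 2 is the loser
        set d := (α1 - α2) * v2 / (2 * α1) with hd
        have hd0 : 0 < d := by rw [hd]; exact div_pos (by nlinarith) (by linarith)
        have key := h2 (x1 + d) (by linarith)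
        have htf : top x1 (x1 + d) = false := htop2 _ _ (by linarith)
        simp only [u2, htf, htb, if_true, if_false, Bool.false_eq_true] at key
        -- key : α1 * (v2 - (x1 + d)) ≤ α2 * (v2 - x1)
        rw [← h0] at key
        have : α1 * d = (α1 - α2) * v2 / 2 := by rw [hd]; field_simp
        nlinarith
      | false =>
        -- bidder 1 is the loser
        set d := (α1 - α2) * v1 / (2 * α1) with hd
        have hd0 : 0 < d := by rw [hd]; exact div_pos (by nlinarith) (by linarith)
        have key := h1 (x1 + d) (by linarith)
        have htf : top (x1 + d) x1 = true := htop1 _ _ (by linarith)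
        simp only [u1, htf, htb, if_true, if_false, Bool.false_eq_true] at key
        rw [← h0] at key
        have : α1 * d = (α1 - α2) * v1 / 2 := by rw [hd]; field_simp
        nlinarith
    · -- tie at x1 > 0: the loser bids 0, stays the loser, pays nothing
      cases htb : top x1 x1 with
      | true =>
        -- bidder 2 is the loser
        have key := h2 0 le_rfl
        have htf : top x1 0 = true := htop1 _ _ h0
        simp only [u2, htf, htb, if_true] at key
        -- key : α2 * (v2 - 0) ≤ α2 * (v2 - x1)
        nlinarith
      | false =>
        have key := h1 0 le_rfl
        have htf : top 0 x1 = false := htop2 _ _ h0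
        simp only [u1, htf, htb, if_false, Bool.false_eq_true] at key
        nlinarith
  · -- bidder 1 wins; she lowers her bid to the midpoint and still wins
    set m := (x1 + x2) / 2 with hm
    have hm1 : x2 < m := by rw [hm]; linarith
    have hm2 : m < x1 := by rw [hm]; linarith
    have hm0 : 0 ≤ m := by linarith
    have key := h1 m hm0
    simp only [u1, htop1 _ _ h, htop1 _ _ hm1, if_true] at key
    nlinarith
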